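/- For every α in (0,2) with α ≠ 1, the improper integral ∫₀^∞ (sin x)/x^α dx converges and equals Γ(1-α)·cos(πα/2). -/

import Mathlib

open Real Filter intervalIntegral

section helpers
open MeasureTheory Set


-- A
lemma int_rpow_exp {s b : ℝ} (hs : -1 < s) (hb : 0 < b) :
    IntegrableOn (fun t : ℝ => t ^ s * Real.exp (-(b * t))) (Ioi 0) := by
  refine (integrableOn_rpow_mul_exp_neg_mul_rpow hs one_pos hb).congr_fun
    (fun t ht => ?_) measurableSet_Ioi
  simp only [Real.rpow_one, neg_mul]

-- B
lemma gamma_rep {a : ℝ} (ha : 0 < a) {x : ℝ} (hx : 0 < x) :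
    ∫ t in Ioi (0:ℝ), t ^ (a - 1) * Real.exp (-(x * t)) = x ^ (-a) * Real.Gamma a := by
  rw [integral_rpow_mul_exp_neg_mul_Ioi ha hx, one_div, ← Real.rpow_neg_one,
    ← Real.rpow_mul hx.le, neg_one_mul]

-- C
lemma F_eval (t T : ℝ) :
    ∫ x in (0:ℝ)..T, Real.exp (-(t*x)) * Real.sin x
      = (1 - Real.exp (-(t*T)) * (Real.cos T + t * Real.sin T)) / (1 + t^2) := by
  have h1t : (1 : ℝ) + t ^ 2 ≠ 0 := by positivity
  have h : ∀ x ∈ Set.uIcc (0:ℝ) T,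
      HasDerivAt (fun x => -(Real.exp (-(t*x)) * (t * Real.sin x + Real.cos x)) / (1+t^2))
        (Real.exp (-(t*x)) * Real.sin x) x := by
    intro x _
    have he : HasDerivAt (fun x : ℝ => Real.exp (-(t*x))) (-t * Real.exp (-(t*x))) x := by
      have := ((hasDerivAt_id x).const_mul t).neg.exp
      simpa [mul_comm] using this
    have hs : HasDerivAt (fun x : ℝ => t * Real.sin x + Real.cos x)
        (t * Real.cos x - Real.sin x) x :=
      ((Real.hasDerivAt_sin x).const_mul t).add (Real.hasDerivAt_cos x)
    have := ((he.mul hs).neg).div_const (1 + t^2)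
    refine this.congr_deriv ?_
    rw [div_eq_iff h1t]
    ring
  rw [intervalIntegral.integral_eq_sub_of_hasDerivAt h
    (((Real.continuous_exp.comp (continuous_const.mul continuous_id).neg).mul
      Real.continuous_sin).intervalIntegrable _ _)]
  simp only [mul_zero, neg_zero, Real.exp_zero, Real.sin_zero, Real.cos_zero]
  rw [← sub_div]
  congr 1
  ring


-- J
lemma int_J {α : ℝ} (hα0 : 0 < α) (hα2 : α < 2) :
    IntegrableOn (fun t : ℝ => t ^ (α-1) / (1 + t^2)) (Ioi 0) := by
  have h1 : IntegrableOn (fun t : ℝ => t ^ (α-1) / (1 + t^2)) (Ioc 0 1) := by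
    have hbase : IntegrableOn (fun t : ℝ => t ^ (α-1)) (Ioc 0 1) := by
      have := intervalIntegral.intervalIntegrable_rpow' (a := 0) (b := 1)
        (r := α - 1) (by linarith)
      rwa [intervalIntegrable_iff_integrableOn_Ioc_of_le zero_le_one] at this
    refine hbase.mono' ?_ ?_
    · apply Measurable.aestronglyMeasurable
      fun_prop
    · refine Filter.eventually_of_mem (self_mem_ae_restrict measurableSet_Ioc) (fun t ht => ?_)
      have ht0 : 0 < t := ht.1
      have h2 : (1:ℝ) ≤ 1 + t^2 := by nlinarith
      rw [Real.norm_eq_abs, abs_div, abs_of_nonneg (Real.rpow_nonneg ht0.le _),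
        abs_of_pos (by positivity : (0:ℝ) < 1 + t^2)]
      calc t ^ (α-1) / (1 + t^2) ≤ t ^ (α-1) / 1 :=
            div_le_div_of_nonneg_left (Real.rpow_nonneg ht0.le _) one_pos h2
        _ = t ^ (α-1) := by rw [div_one]
  have h2 : IntegrableOn (fun t : ℝ => t ^ (α-1) / (1 + t^2)) (Ioi 1) := by
    have hbase : IntegrableOn (fun t : ℝ => t ^ (α-3)) (Ioi 1) :=
      integrableOn_Ioi_rpow_of_lt (by linarith) one_pos
    refine hbase.mono' ?_ ?_
    · apply Measurable.aestronglyMeasurable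
      fun_prop
    · refine Filter.eventually_of_mem (self_mem_ae_restrict measurableSet_Ioi) (fun t ht => ?_)
      have ht1 : (1:ℝ) < t := ht
      have ht0 : 0 < t := by linarith
      rw [Real.norm_eq_abs, abs_div, abs_of_nonneg (Real.rpow_nonneg ht0.le _),
        abs_of_pos (by positivity : (0:ℝ) < 1 + t^2)]
      have : t ^ (α-1) / (1 + t^2) ≤ t ^ (α-1) / t^2 := by
        apply div_le_div_of_nonneg_left (Real.rpow_nonneg ht0.le _) (by positivity)
        nlinarith
      refine this.trans (le_of_eq ?_)
      rw [← Real.rpow_two, ← Real.rpow_sub ht0]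
      congr 1
      ring
  have := h1.union h2
  rwa [Set.Ioc_union_Ioi_eq_Ioi zero_le_one] at this



lemma exp_int {c : ℝ} (hc : 0 < c) :
    ∫ s in Ioi (0:ℝ), Real.exp (-(c*s)) = 1/c := by
  have := integral_rpow_mul_exp_neg_mul_Ioi (a := 1) one_pos hc
  simpa using this

lemma I_eval {α : ℝ} (hα0 : 0 < α) (hα2 : α < 2) :
    ∫ t in Ioi (0:ℝ), t ^ (α-1) / (1 + t^2)
      = Real.pi / (2 * Real.sin (Real.pi * α / 2)) := by
  set ν := volume.restrict (Ioi (0:ℝ)) with hν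
  set g : ℝ → ℝ → ℝ := fun t s => t ^ (α-1) * Real.exp (-((1 + t^2) * s)) with hg
  have hmeas : AEStronglyMeasurable (Function.uncurry g) (ν.prod ν) := by
    apply Measurable.aestronglyMeasurable
    unfold Function.uncurry
    fun_prop
  have hinner : ∀ t ∈ Ioi (0:ℝ), (∫ s, g t s ∂ν) = t ^ (α-1) / (1 + t^2) := by
    intro t ht
    rw [hg]
    simp only
    rw [MeasureTheory.integral_const_mul]
    rw [hν, exp_int (by positivity), mul_one_div]
  have hint : Integrable (Function.uncurry g) (ν.prod ν) := by
    rw [MeasureTheory.integrable_prod_iff hmeas]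
    constructor
    · refine Filter.eventually_of_mem (self_mem_ae_restrict measurableSet_Ioi) (fun t ht => ?_)
      have h : Integrable (fun s : ℝ => t ^ (α-1) * Real.exp (-((1 + t^2) * s))) ν := by
        have h2 : IntegrableOn (fun s : ℝ => Real.exp (-((1+t^2) * s))) (Ioi 0) := by
          have := exp_neg_integrableOn_Ioi 0 (show (0:ℝ) < 1 + t^2 by positivity)
          exact this.congr_fun (fun s _ => by simp only [neg_mul]) measurableSet_Ioi
        exact h2.const_mul _
      exact h
    · have heq : ∀ t ∈ Ioi (0:ℝ),
          (∫ s, ‖Function.uncurry g (t, s)‖ ∂ν) = t ^ (α-1) / (1 + t^2) := by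
        intro t ht
        have ht0 : (0:ℝ) < t := ht
        have habs : ∀ s ∈ Ioi (0:ℝ), ‖g t s‖ = g t s := by
          intro s hs
          rw [Real.norm_eq_abs, abs_of_nonneg]
          rw [hg]; simp only; positivity
        have h1 : (∫ s, ‖g t s‖ ∂ν) = ∫ s, g t s ∂ν := by
          rw [hν]; exact setIntegral_congr_fun measurableSet_Ioi habs
        have h2 : (∫ s, ‖Function.uncurry g (t, s)‖ ∂ν) = ∫ s, ‖g t s‖ ∂ν := rfl
        rw [h2, h1, hinner t ht]
      refine (int_J hα0 hα2).congr ?_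
      refine Filter.eventually_of_mem (self_mem_ae_restrict measurableSet_Ioi) (fun t ht => ?_)
      exact (heq t ht).symm
  have houter : ∀ s ∈ Ioi (0:ℝ), (∫ t, g t s ∂ν)
      = Real.exp (-s) * s ^ (-(α/2)) * ((1/2) * Real.Gamma (α/2)) := by
    intro s hs
    have hs0 : (0:ℝ) < s := hs
    have key := integral_rpow_mul_exp_neg_mul_rpow (p := 2) (q := α - 1)
      (b := s) two_pos (by linarith) hs0
    rw [hν]
    calc (∫ t in Ioi (0:ℝ), g t s)
        = ∫ t in Ioi (0:ℝ), Real.exp (-s) * (t ^ (α-1) * Real.exp (-s * t ^ (2:ℝ))) := by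
          refine setIntegral_congr_fun measurableSet_Ioi (fun t ht => ?_)
          rw [hg]
          simp only
          rw [show t ^ ((2:ℝ)) = t^2 from by
              rw [show ((2:ℝ)) = ((2:ℕ):ℝ) by norm_num, Real.rpow_natCast],
            show -((1 + t^2) * s) = -s + -s * t^2 by ring, Real.exp_add]
          ring
      _ = Real.exp (-s) * (s ^ (-(α - 1 + 1)/2) * (1/2) * Real.Gamma ((α - 1 + 1)/2)) := by
          rw [MeasureTheory.integral_const_mul, key]
      _ = _ := by
          rw [show α - 1 + 1 = α by ring, neg_div]
          ring
  calc ∫ t in Ioi (0:ℝ), t ^ (α-1) / (1 + t^2)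
      = ∫ t, (∫ s, g t s ∂ν) ∂ν := by
        rw [hν]
        exact (setIntegral_congr_fun measurableSet_Ioi hinner).symm
    _ = ∫ s, (∫ t, g t s ∂ν) ∂ν := MeasureTheory.integral_integral_swap hint
    _ = ∫ s in Ioi (0:ℝ), Real.exp (-s) * s ^ (-(α/2)) * ((1/2) * Real.Gamma (α/2)) := by
        rw [hν]
        exact setIntegral_congr_fun measurableSet_Ioi houter
    _ = (∫ s in Ioi (0:ℝ), Real.exp (-s) * s ^ ((1 - α/2) - 1)) * ((1/2) * Real.Gamma (α/2)) := by
        rw [← MeasureTheory.integral_mul_const, show (1 - α/2) - 1 = -(α/2) by ring]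
    _ = Real.Gamma (1 - α/2) * ((1/2) * Real.Gamma (α/2)) := by
        rw [← Real.Gamma_eq_integral (by linarith : (0:ℝ) < 1 - α/2)]
    _ = Real.pi / (2 * Real.sin (Real.pi * α / 2)) := by
        have hrefl := Real.Gamma_mul_Gamma_one_sub (α/2)
        rw [show Real.pi * (α/2) = Real.pi * α / 2 by ring] at hrefl
        rw [show Real.Gamma (1 - α/2) * ((1/2) * Real.Gamma (α/2))
            = (Real.Gamma (α/2) * Real.Gamma (1 - α/2)) / 2 by ring, hrefl, div_div,
          mul_comm]





set_option maxHeartbeats 2000000 in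
lemma step1 {α : ℝ} (hα0 : 0 < α) (hα2 : α < 2) {T : ℝ} (hT : 0 ≤ T) :
    Real.Gamma α * ∫ x in (0:ℝ)..T, Real.sin x / x ^ α
      = ∫ t in Ioi (0:ℝ),
          t ^ (α-1) * ((1 - Real.exp (-(t*T)) * (Real.cos T + t * Real.sin T)) / (1 + t^2)) := by
  set μ := volume.restrict (Ioc (0:ℝ) T) with hμ
  set ν := volume.restrict (Ioi (0:ℝ)) with hν
  set f : ℝ → ℝ → ℝ := fun x t => Real.sin x * (t ^ (α-1) * Real.exp (-(x*t))) with hf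
  have hmeas : AEStronglyMeasurable (Function.uncurry f) (μ.prod ν) := by
    apply Measurable.aestronglyMeasurable
    unfold Function.uncurry
    fun_prop
  have hnorm : ∀ x ∈ Ioc (0:ℝ) T, (∫ t, ‖f x t‖ ∂ν)
      = |Real.sin x| * (x ^ (-α) * Real.Gamma α) := by
    intro x hx
    have hcong : ∀ t ∈ Ioi (0:ℝ), ‖f x t‖
        = |Real.sin x| * (t ^ (α-1) * Real.exp (-(x*t))) := by
      intro t ht
      have ht0 : (0:ℝ) < t := ht
      rw [hf]
      simp only
      rw [Real.norm_eq_abs, abs_mul,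
        abs_of_nonneg (by positivity : (0:ℝ) ≤ t ^ (α-1) * Real.exp (-(x*t)))]
    rw [hν, setIntegral_congr_fun measurableSet_Ioi hcong, MeasureTheory.integral_const_mul,
      gamma_rep hα0 hx.1]
  have hint : Integrable (Function.uncurry f) (μ.prod ν) := by
    rw [MeasureTheory.integrable_prod_iff hmeas]
    constructor
    · refine Filter.eventually_of_mem (self_mem_ae_restrict measurableSet_Ioc) (fun x hx => ?_)
      have h : Integrable (fun t : ℝ => Real.sin x * (t ^ (α-1) * Real.exp (-(x*t)))) ν :=
        (int_rpow_exp (by linarith) hx.1).const_mul _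
      exact h
    · have hbase : IntegrableOn (fun x : ℝ => x ^ (1-α)) (Ioc 0 T) := by
        have := intervalIntegral.intervalIntegrable_rpow' (a := 0) (b := T)
          (r := 1 - α) (by linarith)
        rwa [intervalIntegrable_iff_integrableOn_Ioc_of_le hT] at this
      have hm2 : AEStronglyMeasurable (fun x => ∫ t, ‖Function.uncurry f (x, t)‖ ∂ν) μ :=
        hmeas.norm.integral_prod_right'
      refine Integrable.mono' ((hbase.const_mul (Real.Gamma α))) hm2 ?_
      refine Filter.eventually_of_mem (self_mem_ae_restrict measurableSet_Ioc) (fun x hx => ?_)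
      have hx0 : 0 < x := hx.1
      have h1 : (∫ t, ‖Function.uncurry f (x, t)‖ ∂ν)
          = |Real.sin x| * (x ^ (-α) * Real.Gamma α) := by
        have h1' : (∫ t, ‖f x t‖ ∂ν) = |Real.sin x| * (x ^ (-α) * Real.Gamma α) := hnorm x hx
        exact h1'
      rw [Real.norm_eq_abs, h1, abs_of_nonneg (by positivity), ]
      have hsin : |Real.sin x| ≤ x := by
        simpa [abs_of_pos hx0] using Real.abs_sin_le_abs (x := x)
      calc |Real.sin x| * (x ^ (-α) * Real.Gamma α)
          ≤ x * (x ^ (-α) * Real.Gamma α) := by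
            apply mul_le_mul_of_nonneg_right hsin (by positivity)
        _ = Real.Gamma α * x ^ (1-α) := by
            nth_rewrite 1 [← Real.rpow_one x]
            rw [← mul_assoc, ← Real.rpow_add hx0,
              show (1:ℝ) + -α = 1 - α from by ring, mul_comm]
  have lhs : Real.Gamma α * ∫ x in (0:ℝ)..T, Real.sin x / x ^ α
      = ∫ x, (∫ t, f x t ∂ν) ∂μ := by
    rw [intervalIntegral.integral_of_le hT, ← MeasureTheory.integral_const_mul, hμ]
    refine setIntegral_congr_fun measurableSet_Ioc (fun x hx => ?_)
    have hx0 : 0 < x := hx.1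
    rw [hf]
    simp only
    rw [MeasureTheory.integral_const_mul, gamma_rep hα0 hx0, Real.rpow_neg hx0.le]
    have hxα : x ^ α ≠ 0 := (Real.rpow_pos_of_pos hx0 α).ne'
    field_simp
  have rhs : (∫ t, (∫ x, f x t ∂μ) ∂ν)
      = ∫ t in Ioi (0:ℝ),
          t ^ (α-1) * ((1 - Real.exp (-(t*T)) * (Real.cos T + t * Real.sin T)) / (1 + t^2)) := by
    rw [hν]
    refine setIntegral_congr_fun measurableSet_Ioi (fun t ht => ?_)
    have hfc : ∀ x : ℝ, f x t = t ^ (α-1) * (Real.exp (-(t*x)) * Real.sin x) := by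
      intro x; rw [hf]; simp only; rw [mul_comm x t]; ring
    simp_rw [hfc]
    rw [MeasureTheory.integral_const_mul, hμ, ← intervalIntegral.integral_of_le hT, F_eval]
  rw [lhs, MeasureTheory.integral_integral_swap hint, rhs]





theorem stable_sine_integral (α : ℝ) (hα0 : 0 < α) (hα2 : α < 2) (hα1 : α ≠ 1) :
    Tendsto (fun T : ℝ => ∫ x in (0:ℝ)..T, Real.sin x / x ^ α) atTop
      (nhds (Real.Gamma (1 - α) * Real.cos (Real.pi * α / 2))) := by
  have hΓ : (0:ℝ) < Real.Gamma α := Real.Gamma_pos_of_pos hα0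
  -- dominated convergence
  have key : Tendsto (fun T : ℝ => ∫ t in Ioi (0:ℝ),
      t ^ (α-1) * ((1 - Real.exp (-(t*T)) * (Real.cos T + t * Real.sin T)) / (1 + t^2)))
      atTop (nhds (∫ t in Ioi (0:ℝ), t ^ (α-1) / (1 + t^2))) := by
    apply MeasureTheory.tendsto_integral_filter_of_dominated_convergence
      (bound := fun t => t ^ (α-1) / (1+t^2) + (t ^ (α-1) + t ^ α) * Real.exp (-t))
    · filter_upwards with T
      apply Measurable.aestronglyMeasurable
      fun_prop
    · filter_upwards [eventually_ge_atTop (1:ℝ)] with T hT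
      refine Filter.eventually_of_mem (self_mem_ae_restrict measurableSet_Ioi) (fun t ht => ?_)
      have ht0 : (0:ℝ) < t := ht
      set E := Real.exp (-(t*T)) * (Real.cos T + t * Real.sin T) with hE
      have hEbound : |E| ≤ Real.exp (-t) * (1 + t) := by
        rw [hE, abs_mul, Real.abs_exp]
        have h1 : |Real.cos T + t * Real.sin T| ≤ 1 + t := by
          calc |Real.cos T + t * Real.sin T| ≤ |Real.cos T| + |t * Real.sin T| := abs_add_le _ _
            _ ≤ 1 + t := by
                have := Real.abs_cos_le_one T
                have h2 : |t * Real.sin T| ≤ t := by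
                  rw [abs_mul, abs_of_pos ht0]
                  calc t * |Real.sin T| ≤ t * 1 :=
                        mul_le_mul_of_nonneg_left (Real.abs_sin_le_one T) ht0.le
                    _ = t := mul_one t
                linarith
        have h2 : Real.exp (-(t*T)) ≤ Real.exp (-t) := by
          apply Real.exp_le_exp.2
          nlinarith
        exact mul_le_mul h2 h1 (abs_nonneg _) (Real.exp_pos _).le
      have h1E : |1 - E| ≤ 1 + Real.exp (-t) * (1 + t) := by
        calc |1 - E| ≤ |(1:ℝ)| + |E| := abs_sub _ _
          _ ≤ 1 + Real.exp (-t) * (1 + t) := by rw [abs_one]; linarith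
      have hden : (0:ℝ) < 1 + t^2 := by positivity
      rw [Real.norm_eq_abs, abs_mul, abs_div, abs_of_nonneg (Real.rpow_nonneg ht0.le _),
        abs_of_pos hden]
      calc t ^ (α-1) * (|1 - E| / (1 + t^2))
          ≤ t ^ (α-1) * ((1 + Real.exp (-t) * (1 + t)) / (1 + t^2)) := by
            apply mul_le_mul_of_nonneg_left _ (Real.rpow_nonneg ht0.le _)
            exact div_le_div_of_nonneg_right h1E hden.le
        _ = t ^ (α-1) / (1 + t^2) + t ^ (α-1) * (Real.exp (-t) * (1 + t)) / (1 + t^2) := by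
            ring
        _ ≤ t ^ (α-1) / (1+t^2) + (t ^ (α-1) + t ^ α) * Real.exp (-t) := by
            have hmono : t ^ (α-1) * (Real.exp (-t) * (1 + t)) / (1 + t^2)
                ≤ t ^ (α-1) * (Real.exp (-t) * (1 + t)) := by
              apply div_le_self (by positivity)
              nlinarith
            have heq : t ^ (α-1) * (Real.exp (-t) * (1 + t))
                = (t ^ (α-1) + t ^ α) * Real.exp (-t) := by
              have : t ^ (α-1) * t = t ^ α := by
                nth_rewrite 2 [← Real.rpow_one t]
                rw [← Real.rpow_add ht0]
                congr 1; ring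
              linear_combination Real.exp (-t) * this
            linarith [hmono, heq.le]
    · have h1 := Real.GammaIntegral_convergent hα0
      have h2 := Real.GammaIntegral_convergent (show (0:ℝ) < α + 1 by linarith)
      have h3 : IntegrableOn
          (fun x : ℝ => Real.exp (-x) * x ^ (α-1) + Real.exp (-x) * x ^ (α+1-1)) (Ioi 0) :=
        h1.add h2
      have hG : IntegrableOn (fun t : ℝ => (t ^ (α-1) + t ^ α) * Real.exp (-t)) (Ioi 0) := by
        refine h3.congr_fun (fun t ht => ?_) measurableSet_Ioi
        rw [add_sub_cancel_right]
        ring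
      exact (int_J hα0 hα2).add hG
    · refine Filter.eventually_of_mem (self_mem_ae_restrict measurableSet_Ioi) (fun t ht => ?_)
      have ht0 : (0:ℝ) < t := ht
      have hE0 : Tendsto (fun T : ℝ => Real.exp (-(t*T)) * (Real.cos T + t * Real.sin T))
          atTop (nhds 0) := by
        apply squeeze_zero_norm (a := fun T => Real.exp (-(t*T)) * (1 + t))
        · intro T
          rw [Real.norm_eq_abs, abs_mul, Real.abs_exp]
          apply mul_le_mul_of_nonneg_left _ (Real.exp_pos _).le
          calc |Real.cos T + t * Real.sin T| ≤ |Real.cos T| + |t * Real.sin T| := abs_add_le _ _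
            _ ≤ 1 + t := by
                have := Real.abs_cos_le_one T
                have h2 : |t * Real.sin T| ≤ t := by
                  rw [abs_mul, abs_of_pos ht0]
                  calc t * |Real.sin T| ≤ t * 1 :=
                        mul_le_mul_of_nonneg_left (Real.abs_sin_le_one T) ht0.le
                    _ = t := mul_one t
                linarith
        · have h1 : Tendsto (fun T : ℝ => t * T) atTop atTop :=
            Tendsto.const_mul_atTop ht0 tendsto_id
          have h2 : Tendsto (fun T : ℝ => Real.exp (-(t*T))) atTop (nhds 0) :=
            Real.tendsto_exp_atBot.comp (tendsto_neg_atTop_atBot.comp h1)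
          simpa using h2.mul_const (1 + t)
      have h5 := (((tendsto_const_nhds (x := (1:ℝ))).sub hE0).div_const
        (1 + t^2)).const_mul (t ^ (α-1))
      have hvaleq : t ^ (α-1) / (1 + t^2) = t ^ (α-1) * (((1:ℝ) - 0)/(1+t^2)) := by ring
      rw [hvaleq]
      exact h5
  -- assemble
  have hs2 : Real.sin (Real.pi * α / 2) ≠ 0 := by
    apply ne_of_gt
    apply Real.sin_pos_of_pos_of_lt_pi <;> nlinarith [Real.pi_pos]
  have hsin : Real.sin (Real.pi * α) ≠ 0 := by
    intro h
    rw [Real.sin_eq_zero_iff] at h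
    obtain ⟨n, hn⟩ := h
    have : (n:ℝ) = α := by
      have hπ := Real.pi_ne_zero
      have h3 : Real.pi * (n:ℝ) = Real.pi * α := by linear_combination hn
      exact mul_left_cancel₀ hπ h3
    have h0 : (0:ℝ) < (n:ℝ) := by rw [this]; exact hα0
    have h2 : (n:ℝ) < 2 := by rw [this]; exact hα2
    have : n = 1 := by
      have : (0:ℤ) < n := by exact_mod_cast h0
      have : n < 2 := by exact_mod_cast h2
      omega
    apply hα1
    rw [← ‹(n:ℝ) = α›, this]; norm_num
  have hcos : Real.cos (Real.pi * α / 2) ≠ 0 := by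
    intro h
    apply hsin
    rw [show Real.pi * α = 2 * (Real.pi * α / 2) by ring, Real.sin_two_mul, h, mul_zero]
  have refl' : Real.Gamma α * Real.Gamma (1-α) * Real.sin (Real.pi*α) = Real.pi := by
    rw [Real.Gamma_mul_Gamma_one_sub α, div_mul_cancel₀ _ hsin]
  have hval : (Real.Gamma α)⁻¹ * (Real.pi / (2 * Real.sin (Real.pi * α / 2)))
      = Real.Gamma (1 - α) * Real.cos (Real.pi * α / 2) := by
    have h2 : Real.sin (Real.pi * α)
        = 2 * Real.sin (Real.pi * α / 2) * Real.cos (Real.pi * α / 2) := by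
      rw [show Real.pi * α = 2 * (Real.pi * α / 2) by ring, Real.sin_two_mul]; ring
    field_simp
    linear_combination Real.Gamma α * Real.Gamma (1-α) * h2 - refl'
  have hfin : Tendsto (fun T : ℝ => (Real.Gamma α)⁻¹ * (Real.Gamma α *
      ∫ x in (0:ℝ)..T, Real.sin x / x ^ α)) atTop
      (nhds ((Real.Gamma α)⁻¹ * (Real.pi / (2 * Real.sin (Real.pi * α / 2))))) := by
    apply Tendsto.const_mul
    rw [← I_eval hα0 hα2]
    apply key.congr'
    filter_upwards [eventually_ge_atTop (0:ℝ)] with T hT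
    exact (step1 hα0 hα2 hT).symm
  rw [hval] at hfin
  refine hfin.congr (fun T => ?_)
  rw [← mul_assoc, inv_mul_cancel₀ hΓ.ne', one_mul]

end helpers
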